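/- arXiv:2104.09983 — 2 statements merged into one kernel-verified Lean document; each statement's English description precedes it below -/
import Mathlib

section
/- Let Y and Z be metric spaces, with Z proper (closed bounded subsets of Z are compact). Let (K_n)_{n∈ℕ} be a nondecreasing sequence of compact subsets of Y whose union is all of Y, and let y ∈ K_0. Let (J_n) be a sequence of reals with J_n ≥ 1 for all n, converging to a real number J. For each n let h_n : Y → Z be a map such that for all x, x' ∈ K_n one has J_n⁻¹ · dist(x, x') ≤ dist(h_n(x), h_n(x')) ≤ J_n · dist(x, x'), and suppose the set {h_n(y) : n ∈ ℕ} is bounded in Z. Then there exists a map h : Y → Z such that for all x, x' ∈ Y one has J⁻¹ · dist(x, x') ≤ dist(h(x), h(x')) ≤ J · dist(x, x'); moreover, for every x ∈ Y there exists a strictly increasing sequence of indices (n_i) such that h_{n_i}(x) → h(x) in Z. -/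
/-- **Extraction of a bilipschitz limit map** (Lemma 5.2).
Let `Y` and `Z` be metric spaces with `Z` proper. Let `K n` be a nondecreasing
exhaustion of `Y` by compact sets, `y ∈ K 0`, and `Jseq n ≥ 1` converging to `J`.
Suppose each `h n : Y → Z` is `Jseq n`-bilipschitz on `K n`, and that the set of
images `{h n y}` is bounded. Then there is a `J`-bilipschitz map `g : Y → Z`,
and each value `g x` is a subsequential limit of the `h n x`. -/
theorem bilipschitz_limit_of_exhaustion
    {Y Z : Type*} [MetricSpace Y] [MetricSpace Z] [ProperSpace Z]
    (K : ℕ → Set Y) (hKcomp : ∀ n, IsCompact (K n)) (hKmono : Monotone K)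
    (hKunion : (⋃ n, K n) = Set.univ)
    (y : Y) (hy : y ∈ K 0)
    (J : ℝ) (Jseq : ℕ → ℝ) (hJone : ∀ n, 1 ≤ Jseq n)
    (hJlim : Filter.Tendsto Jseq Filter.atTop (nhds J))
    (h : ℕ → Y → Z)
    (hbilip : ∀ n, ∀ x ∈ K n, ∀ x' ∈ K n,
      (Jseq n)⁻¹ * dist x x' ≤ dist (h n x) (h n x') ∧
        dist (h n x) (h n x') ≤ Jseq n * dist x x')
    (hbdd : Bornology.IsBounded (Set.range fun n => h n y)) :
    ∃ g : Y → Z,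
      (∀ x x' : Y,
        J⁻¹ * dist x x' ≤ dist (g x) (g x') ∧ dist (g x) (g x') ≤ J * dist x x') ∧
      ∀ x : Y, ∃ φ : ℕ → ℕ, StrictMono φ ∧
        Filter.Tendsto (fun i => h (φ i) x) Filter.atTop (nhds (g x)) := by
  classical
  open Filter Topology in
  -- an ultrafilter extending atTop
  have : (Filter.atTop : Filter ℕ).NeBot := Filter.atTop_neBot
  set U : Ultrafilter ℕ := Ultrafilter.of Filter.atTop with hU
  have hUle : (U : Filter ℕ) ≤ Filter.atTop := Ultrafilter.of_le _
  -- J ≥ 1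
  have hJ1 : 1 ≤ J := ge_of_tendsto hJlim (Filter.Eventually.of_forall hJone)
  have hJpos : 0 < J := lt_of_lt_of_le one_pos hJ1
  -- bound on images of y
  obtain ⟨r, hr⟩ := hbdd.subset_closedBall (h 0 y)
  have hry : ∀ n, dist (h n y) (h 0 y) ≤ r := fun n => hr ⟨n, rfl⟩
  -- each point lies in some K N, hence in K n for n ≥ N
  have hmemK : ∀ x : Y, ∃ N, ∀ n ≥ N, x ∈ K n := by
    intro x
    have : x ∈ ⋃ n, K n := by rw [hKunion]; trivial
    obtain ⟨N, hN⟩ := Set.mem_iUnion.1 this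
    exact ⟨N, fun n hn => hKmono hn hN⟩
  -- each sequence n ↦ h n x converges along U
  have hlim : ∀ x : Y, ∃ z : Z, Filter.Tendsto (fun n => h n x) U (nhds z) := by
    intro x
    obtain ⟨N, hN⟩ := hmemK x
    set s : Set Z := Metric.closedBall (h 0 y) ((J + 1) * dist x y + r) with hs
    have hscomp : IsCompact s := isCompact_closedBall _ _
    have hmem : ∀ᶠ n in Filter.atTop, h n x ∈ s := by
      filter_upwards [Filter.eventually_ge_atTop N,
        hJlim.eventually (gt_mem_nhds (lt_add_one J))] with n hn hJn
      have hxK : x ∈ K n := hN n hn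
      have hyK : y ∈ K n := hKmono (Nat.zero_le n) hy
      have h1 : dist (h n x) (h n y) ≤ Jseq n * dist x y :=
        (hbilip n x hxK y hyK).2
      have h2 : Jseq n * dist x y ≤ (J + 1) * dist x y :=
        mul_le_mul_of_nonneg_right hJn.le dist_nonneg
      calc dist (h n x) (h 0 y) ≤ dist (h n x) (h n y) + dist (h n y) (h 0 y) :=
            dist_triangle _ _ _
        _ ≤ (J + 1) * dist x y + r := add_le_add (h1.trans h2) (hry n)
    have hmemU : s ∈ (U.map fun n => h n x) := Filter.mem_map.2 (hUle hmem)
    obtain ⟨z, _, hz⟩ := hscomp.ultrafilter_le_nhds (U.map fun n => h n x) (Filter.le_principal_iff.2 hmemU)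
    exact ⟨z, hz⟩
  choose g hg using hlim
  have hJU : Filter.Tendsto Jseq U (nhds J) := hJlim.mono_left hUle
  refine ⟨g, fun x x' => ?_, fun x => ?_⟩
  · obtain ⟨N, hN⟩ := hmemK x
    obtain ⟨N', hN'⟩ := hmemK x'
    have hev : ∀ᶠ n in (U : Filter ℕ),
        (Jseq n)⁻¹ * dist x x' ≤ dist (h n x) (h n x') ∧
          dist (h n x) (h n x') ≤ Jseq n * dist x x' := by
      apply hUle
      filter_upwards [Filter.eventually_ge_atTop N, Filter.eventually_ge_atTop N']
        with n hn hn'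
      exact hbilip n x (hN n hn) x' (hN' n hn')
    have hdist : Filter.Tendsto (fun n => dist (h n x) (h n x')) U
        (nhds (dist (g x) (g x'))) := (hg x).dist (hg x')
    constructor
    · have h1 : Filter.Tendsto (fun n => (Jseq n)⁻¹ * dist x x') U
          (nhds (J⁻¹ * dist x x')) :=
        ((hJU.inv₀ hJpos.ne').mul tendsto_const_nhds)
      exact le_of_tendsto_of_tendsto h1 hdist (hev.mono fun n hn => hn.1)
    · have h2 : Filter.Tendsto (fun n => Jseq n * dist x x') U
          (nhds (J * dist x x')) := hJU.mul tendsto_const_nhds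
      exact le_of_tendsto_of_tendsto hdist h2 (hev.mono fun n hn => hn.2)
  · have hcp : MapClusterPt (g x) Filter.atTop (fun n => h n x) :=
      ((hg x).mapClusterPt).mono hUle
    obtain ⟨ψ, hψ, hψt⟩ := TopologicalSpace.FirstCountableTopology.tendsto_subseq hcp
    exact ⟨ψ, hψ, hψt⟩
end

section
/- Let z₀ = √(√5 − 2) and define haze(z) = 3.3957 · z(1 − z²)/(1 + z²). Then for every y ∈ [0, 1.0196] there exists a unique z ∈ [z₀, 1] with haze(z) = y. Moreover the resulting inverse is monotonically decreasing: if y₁, y₂ ∈ [0, 1.0196] with y₁ ≤ y₂, and z₁, z₂ ∈ [z₀, 1] satisfy haze(z₁) = y₁ and haze(z₂) = y₂, then z₂ ≤ z₁. -/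
noncomputable def zZero : ℝ := Real.sqrt (Real.sqrt 5 - 2)

noncomputable def haze (z : ℝ) : ℝ := 3.3957 * (z * (1 - z ^ 2) / (1 + z ^ 2))

lemma sqrt5_sq : (Real.sqrt 5) ^ 2 = 5 := Real.sq_sqrt (by norm_num)

lemma sqrt5_lb : (2.2360679 : ℝ) ≤ Real.sqrt 5 := by
  nlinarith [sqrt5_sq, Real.sqrt_nonneg 5]

lemma sqrt5_ub : Real.sqrt 5 ≤ 2.2360680 := by
  nlinarith [sqrt5_sq, Real.sqrt_nonneg 5]

lemma zZero_sq : zZero ^ 2 = Real.sqrt 5 - 2 := by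
  rw [zZero, Real.sq_sqrt]
  nlinarith [sqrt5_lb]

lemma zZero_pos : 0 < zZero := by
  rw [zZero]
  apply Real.sqrt_pos.mpr
  nlinarith [sqrt5_lb]

lemma zZero_le_one : zZero ≤ 1 := by
  nlinarith [zZero_sq, zZero_pos, sqrt5_ub]

lemma zZero_lb : (0.485868 : ℝ) ≤ zZero := by
  have := zZero_sq
  nlinarith [zZero_pos, sqrt5_lb]

lemma haze_strict_anti {a b : ℝ} (ha : zZero ≤ a) (hb : b ≤ 1) (hab : a < b) :
    haze b < haze a := by
  have hz2 := zZero_sq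
  have hz0 := zZero_pos
  have ha0 : 0 < a := lt_of_lt_of_le hz0 ha
  have hb0 : 0 < b := lt_trans ha0 hab
  have hbz : zZero < b := lt_of_le_of_lt ha hab
  have hkey : 1 < (a + b) ^ 2 + a ^ 2 * b ^ 2 := by
    have h1 : 2 * zZero < a + b := by linarith
    have h2 : zZero ^ 2 ≤ a * b := by nlinarith
    nlinarith [sqrt5_sq, sq_nonneg zZero]
  have hda : (0:ℝ) < 1 + a ^ 2 := by positivity
  have hdb : (0:ℝ) < 1 + b ^ 2 := by positivity
  rw [haze, haze]
  rw [mul_lt_mul_iff_right₀ (by norm_num : (0:ℝ) < 3.3957)]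
  rw [div_lt_div_iff₀ hdb hda]
  nlinarith [mul_pos ha0 hb0, sq_nonneg (a - b), mul_pos hda hdb]

lemma haze_one : haze 1 = 0 := by norm_num [haze]

lemma haze_zZero : 1.0196 ≤ haze zZero := by
  have hz2 := zZero_sq
  have hz0 := zZero_pos
  have hlb := zZero_lb
  rw [haze]
  have hd : (0:ℝ) < 1 + zZero ^ 2 := by positivity
  rw [← mul_div_assoc, le_div_iff₀ hd]
  nlinarith [sqrt5_lb, sqrt5_ub]

lemma haze_cont : ContinuousOn haze (Set.Icc zZero 1) := by
  apply Continuous.continuousOn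
  unfold haze
  apply Continuous.mul continuous_const
  apply Continuous.div (by continuity) (by continuity)
  intro x; positivity

/-- The function `haze` restricted to `[z₀, 1]` has a well-defined inverse on
`[0, 1.0196]`: every `y` in that range is attained by a unique `z ∈ [z₀, 1]`,
and the resulting inverse is monotonically decreasing. -/
theorem haze_inverse_exists_and_antitone :
    (∀ y ∈ Set.Icc (0 : ℝ) 1.0196, ∃! z, z ∈ Set.Icc zZero 1 ∧ haze z = y) ∧
    ∀ y₁ ∈ Set.Icc (0 : ℝ) 1.0196, ∀ y₂ ∈ Set.Icc (0 : ℝ) 1.0196, y₁ ≤ y₂ →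
      ∀ z₁ ∈ Set.Icc zZero 1, ∀ z₂ ∈ Set.Icc zZero 1,
        haze z₁ = y₁ → haze z₂ = y₂ → z₂ ≤ z₁ := by
  constructor
  · intro y hy
    have hsub : Set.Icc (haze 1) (haze zZero) ⊆ haze '' Set.Icc zZero 1 :=
      intermediate_value_Icc' zZero_le_one haze_cont
    have hyin : y ∈ Set.Icc (haze 1) (haze zZero) := by
      rw [haze_one]
      exact ⟨hy.1, le_trans hy.2 haze_zZero⟩
    obtain ⟨z, hz, hzy⟩ := hsub hyin
    refine ⟨z, ⟨hz, hzy⟩, ?_⟩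
    rintro w ⟨hw, hwy⟩
    by_contra hne
    rcases lt_or_gt_of_ne hne with h | h
    · have := haze_strict_anti hw.1 hz.2 h
      rw [hzy, hwy] at this; exact lt_irrefl y this
    · have := haze_strict_anti hz.1 hw.2 h
      rw [hzy, hwy] at this; exact lt_irrefl y this
  · intro y₁ _ y₂ _ hle z₁ hz₁ z₂ hz₂ h1 h2
    by_contra h
    push_neg at h
    have := haze_strict_anti hz₁.1 hz₂.2 h
    rw [h1, h2] at this
    linarith
end
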